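/- The two simple B₃-valued braid monodromy factorizations (σ₁²σ₂σ₁⁻², σ₂) and (σ₁σ₂σ₁⁻¹, σ₁⁻¹σ₂σ₁) have the same product m₂·m₁ (monodromy at infinity) and are weakly Hurwitz equivalent (they are globally conjugate), but are not strongly Hurwitz equivalent. -/

import Mathlib

/-- The braid relation `σ₁σ₂σ₁ = σ₂σ₁σ₂` as a relator in the free group on two
generators. -/
def braidRel : Set (FreeGroup (Fin 2)) :=
  {FreeGroup.of 0 * FreeGroup.of 1 * FreeGroup.of 0 *
    (FreeGroup.of 1 * FreeGroup.of 0 * FreeGroup.of 1)⁻¹}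

/-- The braid group `B₃ = ⟨σ₁,σ₂ | σ₁σ₂σ₁ = σ₂σ₁σ₂⟩`. -/
abbrev B3 := PresentedGroup braidRel

/-- The standard generator `σ₁` of `B₃`. -/
def σ₁ : B3 := PresentedGroup.of 0

/-- The standard generator `σ₂` of `B₃`. -/
def σ₂ : B3 := PresentedGroup.of 1

/-- A single Hurwitz move on a braid monodromy factorization, recorded as a list
`(m₁, …, m_r)` of elements of `G`: `(…, m_i, m_{i+1}, …) ↦ (…, m_i⁻¹ m_{i+1} m_i, m_i, …)`. -/
inductive HurwitzMove {G : Type*} [Group G] : List G → List G → Prop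
  | mk (l₁ l₂ : List G) (a b : G) :
      HurwitzMove (l₁ ++ a :: b :: l₂) (l₁ ++ (a⁻¹ * b * a) :: a :: l₂)

/-- Strong Hurwitz equivalence: the equivalence relation generated by Hurwitz moves
and their inverses. -/
def StrongEq {G : Type*} [Group G] : List G → List G → Prop :=
  Relation.EqvGen HurwitzMove

/-- Weak Hurwitz equivalence: additionally allows global conjugation
`(m_i) ↦ (g⁻¹ m_i g)`. -/
def WeakEq {G : Type*} [Group G] : List G → List G → Prop :=
  Relation.EqvGen fun x y =>
    HurwitzMove x y ∨ ∃ g : G, y = x.map fun m => g⁻¹ * m * g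

/-- The factorization `(σ₁²σ₂σ₁⁻², σ₂)`. -/
def fact₁ : List B3 := [σ₁ ^ 2 * σ₂ * (σ₁ ^ 2)⁻¹, σ₂]

/-- The factorization `(σ₁σ₂σ₁⁻¹, σ₁⁻¹σ₂σ₁)`. -/
def fact₂ : List B3 := [σ₁ * σ₂ * σ₁⁻¹, σ₁⁻¹ * σ₂ * σ₁]

-- auxiliary
def f2 : Fin 2 → Equiv.Perm (Fin 3) := ![Equiv.swap 0 1, Equiv.swap 1 2]

lemma f2rel : ∀ r ∈ braidRel, FreeGroup.lift f2 r = 1 := by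
  intro r hr
  simp only [braidRel, Set.mem_singleton_iff] at hr
  subst hr
  simp only [map_mul, map_inv, FreeGroup.lift_apply_of, f2]
  decide

def φ : B3 →* Equiv.Perm (Fin 3) := PresentedGroup.toGroup f2rel

lemma φσ₁ : φ σ₁ = Equiv.swap 0 1 := PresentedGroup.toGroup.of f2rel
lemma φσ₂ : φ σ₂ = Equiv.swap 1 2 := PresentedGroup.toGroup.of f2rel

lemma key (l₁ l₂ : List B3) (a b : B3) :
    ((l₁ ++ a :: b :: l₂).map φ = [Equiv.swap 1 2, Equiv.swap 1 2]) ↔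
      (l₁ = [] ∧ l₂ = [] ∧ φ a = Equiv.swap 1 2 ∧ φ b = Equiv.swap 1 2) := by
  match l₁ with
  | [] => constructor <;> (intro h; simp at h ⊢; tauto)
  | [c] => simp
  | c :: d :: t => simp

lemma strong_inv {x y : List B3} (h : StrongEq x y) :
    (x.map φ = [Equiv.swap 1 2, Equiv.swap 1 2]) ↔
      (y.map φ = [Equiv.swap 1 2, Equiv.swap 1 2]) := by
  induction h with
  | rel _ _ h =>
    cases h with
    | mk l₁ l₂ a b =>
      rw [key, key]
      constructor
      · rintro ⟨h1, h2, h3, h4⟩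
        refine ⟨h1, h2, ?_, h3⟩
        simp [map_mul, map_inv, h3, h4]
      · rintro ⟨h1, h2, h3, h4⟩
        refine ⟨h1, h2, h4, ?_⟩
        simp only [map_mul, map_inv, h4] at h3
        have := congrArg (fun z => Equiv.swap 1 2 * z * (Equiv.swap 1 2)⁻¹) h3
        simpa [mul_assoc] using this
  | refl => exact Iff.rfl
  | symm _ _ _ ih => exact ih.symm
  | trans _ _ _ _ _ ih1 ih2 => exact ih1.trans ih2

lemma braid : σ₁ * σ₂ * σ₁ = σ₂ * σ₁ * σ₂ := by
  have : (PresentedGroup.mk braidRel) (FreeGroup.of 0 * FreeGroup.of 1 * FreeGroup.of 0 *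
      (FreeGroup.of 1 * FreeGroup.of 0 * FreeGroup.of 1)⁻¹) = 1 := by
    apply (QuotientGroup.eq_one_iff _).mpr
    exact Subgroup.subset_normalClosure rfl
  simp only [map_mul, map_inv] at this
  have h2 : σ₁ * σ₂ * σ₁ * (σ₂ * σ₁ * σ₂)⁻¹ = 1 := by
    simpa [σ₁, σ₂, PresentedGroup.of, mul_assoc] using this
  group at h2 ⊢
  exact mul_inv_eq_one.mp (by simpa [mul_assoc] using h2)

theorem stmt_9 :
    σ₂ * (σ₁ ^ 2 * σ₂ * (σ₁ ^ 2)⁻¹) =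
      (σ₁⁻¹ * σ₂ * σ₁) * (σ₁ * σ₂ * σ₁⁻¹) ∧
    fact₂ = fact₁.map (fun m => σ₁⁻¹ * m * σ₁) ∧
    WeakEq fact₁ fact₂ ∧
    ¬ StrongEq fact₁ fact₂ := by
  have hconj : fact₂ = fact₁.map (fun m => σ₁⁻¹ * m * σ₁) := by
    have e1 : σ₁ * σ₂ * σ₁⁻¹ = σ₁⁻¹ * (σ₁ ^ 2 * σ₂ * (σ₁ ^ 2)⁻¹) * σ₁ := by group
    simp [fact₁, fact₂, e1]
  refine ⟨?_, hconj, ?_, ?_⟩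
  · have h : (σ₁ * σ₂ * σ₁) * (σ₁ * σ₂) = σ₂ * σ₁ * (σ₁ * σ₂ * σ₁) := by
      rw [braid]; group
    have h2 := congrArg (fun z => σ₁⁻¹ * z * (σ₁ * σ₁)⁻¹) h
    group at h2 ⊢
    exact h2
  · exact Relation.EqvGen.rel _ _ (Or.inr ⟨σ₁, hconj⟩)
  · intro h
    have h1 : fact₁.map φ = [Equiv.swap 1 2, Equiv.swap 1 2] := by
      simp [fact₁, map_mul, map_inv, map_pow, φσ₁, φσ₂]
      decide
    have h2 := (strong_inv h).mp h1
    simp [fact₂, map_mul, map_inv, φσ₁, φσ₂] at h2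
    revert h2
    decide
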